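/- For each positive integer p and all t > 0, the function (1 − e^{−(p+1)t}) φ'(t) + (p+1) e^{−(p+1)t} φ(t) is positive, where φ(t) = 1/(1 − e^{−t}) − 1/t. -/

import Mathlib

open Real

noncomputable def phi (t : ℝ) : ℝ := 1 / (1 - Real.exp (-t)) - 1 / t

lemma exp_neg_lt_one {t : ℝ} (ht : 0 < t) : Real.exp (-t) < 1 := by
  rw [Real.exp_lt_one_iff]; linarith

lemma one_sub_exp_lt {t : ℝ} (ht : 0 < t) : 1 - Real.exp (-t) < t := by
  have := Real.add_one_lt_exp (x := -t) (by linarith)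
  linarith

lemma phi_pos {t : ℝ} (ht : 0 < t) : 0 < phi t := by
  have h1 := exp_neg_lt_one ht
  have h2 := one_sub_exp_lt ht
  have h3 : 0 < 1 - Real.exp (-t) := by linarith
  have : 1 / t < 1 / (1 - Real.exp (-t)) := by
    apply one_div_lt_one_div_of_lt h3 h2
  unfold phi; linarith

lemma hasDerivAt_phi {t : ℝ} (ht : 0 < t) :
    HasDerivAt phi (1 / t ^ 2 - Real.exp (-t) / (1 - Real.exp (-t)) ^ 2) t := by
  have h1 := exp_neg_lt_one ht
  have h3 : 1 - Real.exp (-t) ≠ 0 := by linarith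
  have hd1 : HasDerivAt (fun t : ℝ => 1 - Real.exp (-t)) (Real.exp (-t)) t := by
    have := ((Real.hasDerivAt_exp (-t)).comp t ((hasDerivAt_id t).neg)).const_sub 1
    simpa using this
  have hd2 : HasDerivAt (fun t : ℝ => 1 / (1 - Real.exp (-t)))
      (-(Real.exp (-t)) / (1 - Real.exp (-t)) ^ 2) t := by
    simpa [Pi.inv_def] using hd1.inv h3
  have hd3 : HasDerivAt (fun t : ℝ => 1 / t) (-(1 : ℝ) / t ^ 2) t := by
    simpa [Pi.inv_def] using (hasDerivAt_id t).inv ht.ne'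
  have : HasDerivAt phi (-(Real.exp (-t)) / (1 - Real.exp (-t)) ^ 2 - -(1 : ℝ) / t ^ 2) t :=
    hd2.sub hd3
  convert this using 1
  ring

lemma deriv_phi_pos {t : ℝ} (ht : 0 < t) :
    0 < deriv phi t := by
  rw [(hasDerivAt_phi ht).deriv]
  have h1 := exp_neg_lt_one ht
  have h3 : 0 < 1 - Real.exp (-t) := by linarith
  have key : t ^ 2 * Real.exp (-t) < (1 - Real.exp (-t)) ^ 2 := by
    have hx : 0 < t / 2 := by linarith
    have hs : t / 2 < Real.sinh (t / 2) := Real.self_lt_sinh_iff.mpr hx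
    rw [Real.sinh_eq] at hs
    have he : t * Real.exp (-(t / 2)) < 1 - Real.exp (-t) := by
      have hpos := Real.exp_pos (-(t / 2))
      have : (Real.exp (t / 2) - Real.exp (-(t / 2))) * Real.exp (-(t / 2))
          = 1 - Real.exp (-t) := by
        rw [sub_mul, ← Real.exp_add, ← Real.exp_add,
          show t/2 + -(t/2) = (0:ℝ) by ring, show -(t/2) + -(t/2) = -t by ring,
          Real.exp_zero]
      nlinarith
    have hpos2 : 0 < t * Real.exp (-(t / 2)) :=
      mul_pos ht (Real.exp_pos _)
    have hsq : (t * Real.exp (-(t / 2))) ^ 2 < (1 - Real.exp (-t)) ^ 2 := by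
      apply pow_lt_pow_left₀ he hpos2.le
      norm_num
    calc t ^ 2 * Real.exp (-t) = (t * Real.exp (-(t / 2))) ^ 2 := by
          have hsqexp : Real.exp (-(t/2)) ^ 2 = Real.exp (-t) := by
            rw [pow_two, ← Real.exp_add]; congr 1; ring
          rw [mul_pow, hsqexp]
      _ < (1 - Real.exp (-t)) ^ 2 := hsq
  have h4 : Real.exp (-t) / (1 - Real.exp (-t)) ^ 2 < 1 / t ^ 2 := by
    rw [div_lt_div_iff₀ (by positivity) (by positivity)]
    nlinarith
  linarith

theorem phi_expression_pos (p : ℕ) (hp : 1 ≤ p) (t : ℝ) (ht : 0 < t) :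
    0 < (1 - Real.exp (-((p : ℝ) + 1) * t)) * deriv phi t
        + ((p : ℝ) + 1) * Real.exp (-((p : ℝ) + 1) * t) * phi t := by
  have hpt : 0 < ((p : ℝ) + 1) * t := by positivity
  have h1 : Real.exp (-((p : ℝ) + 1) * t) < 1 := by
    rw [Real.exp_lt_one_iff]; linarith [hpt]
  have h2 : 0 < 1 - Real.exp (-((p : ℝ) + 1) * t) := by linarith
  have h3 := deriv_phi_pos ht
  have h4 := phi_pos ht
  have h5 : (0:ℝ) < (p : ℝ) + 1 := by positivity
  have h6 := Real.exp_pos (-((p : ℝ) + 1) * t)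
  positivity
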